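/- Fix k ∈ ℕ and n ≥ 1. Identify each partition of the barred copy of [(k+1)n] with a partition of [(k+1)n] by relabeling x̄ ↦ x. Then for every π ∈ NC^{(k)}(n), the Kreweras complement Kr(π) again belongs to NC^{(k)}(n); moreover the map π ↦ Kr(π) is a bijection of NC^{(k)}(n) onto itself, and it reverses the reverse-refinement order: if π, ρ ∈ NC^{(k)}(n) with π ≼ ρ, then Kr(ρ) ≼ Kr(π). -/

import Mathlib

open scoped BigOperators
attribute [local instance] Classical.propDecidable

/-- A (set) partition of a type `X`: nonempty blocks, every point in a unique block. -/
def IsPartition {X : Type*} (P : Finset (Finset X)) : Prop :=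
  (∀ B ∈ P, B.Nonempty) ∧ ∀ x : X, ∃! B, B ∈ P ∧ x ∈ B

/-- Non-crossing collection of blocks in a linear order. -/
def IsNonCrossing {X : Type*} [LinearOrder X] (P : Finset (Finset X)) : Prop :=
  ∀ a b c d : X, a < b → b < c → c < d →
    (∃ B ∈ P, a ∈ B ∧ c ∈ B) → (∃ B ∈ P, b ∈ B ∧ d ∈ B) →
    ∃ B ∈ P, a ∈ B ∧ b ∈ B

/-- The finset `NC(n)` of non-crossing partitions of `[n]` (modelled on `Fin n`). -/
noncomputable def ncFinset (n : ℕ) : Finset (Finset (Finset (Fin n))) :=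
  Finset.univ.filter fun P => IsPartition P ∧ IsNonCrossing P

/-- The subtuple `(a_1,…,a_n)|V` of the entries indexed by `V`, in increasing order. -/
noncomputable def restrictTuple {A : Type*} {n : ℕ} (a : Fin n → A) (V : Finset (Fin n)) :
    Fin V.card → A :=
  fun i => a (V.orderIsoOfFin rfl i).1
/-- The interleaved set `[m] ∪ [m̄]` with order `1 < 1̄ < 2 < 2̄ < ⋯ < m < m̄`
(unbarred = `false`, barred = `true`). -/
abbrev Interl (m : ℕ) := Lex (Fin m × Bool)

/-- The copy of a block of `[m]` inside the unbarred part of `[m] ∪ [m̄]`. -/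
def unbar {m : ℕ} (B : Finset (Fin m)) : Finset (Interl m) :=
  B.image fun i => toLex (i, false)

/-- The copy of a block of `[m]` inside the barred part of `[m] ∪ [m̄]`. -/
def barred {m : ℕ} (B : Finset (Fin m)) : Finset (Interl m) :=
  B.image fun i => toLex (i, true)

/-- The union `p ∪ q` of a partition `p` of `[m]` and a partition `q` of the barred copy
`[m̄]` (blocks of `q` being recorded by their unbarred labels), as a collection of blocks
of the interleaved set `[m] ∪ [m̄]`. -/
noncomputable def unionPart {m : ℕ} (p q : Finset (Finset (Fin m))) :
    Finset (Finset (Interl m)) :=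
  p.image unbar ∪ q.image barred

/-- `P` refines `Q` (reverse refinement order: `P ≼ Q`). -/
def Refines {X : Type*} (P Q : Finset (Finset X)) : Prop :=
  ∀ B ∈ P, ∃ C ∈ Q, B ⊆ C

/-- `q` is the Kreweras complement of `p`: `q` is a partition of `[m̄]` (identified with
a partition of `[m]` by relabeling) such that `p ∪ q` is non-crossing on the interleaved
set, and `q` is the greatest such partition for the reverse refinement order. -/
def IsKr {m : ℕ} (p q : Finset (Finset (Fin m))) : Prop :=
  IsPartition q ∧ IsNonCrossing (unionPart p q) ∧
    ∀ q' : Finset (Finset (Fin m)), IsPartition q' → IsNonCrossing (unionPart p q') →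
      Refines q' q

/-- The Kreweras complement `Kr(p)`, as a function (defined via choice: for a
non-crossing partition `p` the complement exists and is unique). -/
noncomputable def kr {m : ℕ} (p : Finset (Finset (Fin m))) : Finset (Finset (Fin m)) :=
  if h : ∃ q, IsKr p q then h.choose else ∅
/-- The reduction map `Red : [(k+1)n] → [n]`, sending `x` to its residue mod `n`
(with `Fin` modelling, `x ↦ x % n`). -/
def red {k n : ℕ} (x : Fin ((k + 1) * n)) : Fin n :=
  ⟨x.1 % n, Nat.mod_lt _ (Nat.pos_of_ne_zero (by rintro rfl; exact absurd x.2 (by simp)))⟩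

/-- The image of a collection of blocks under the reduction map. -/
noncomputable def redPart {k n : ℕ} (P : Finset (Finset (Fin ((k + 1) * n)))) :
    Finset (Finset (Fin n)) :=
  P.image fun B => B.image red

/-- The reduction map on the interleaved set, preserving bars. -/
def redInterl {k n : ℕ} (x : Interl ((k + 1) * n)) : Interl n :=
  toLex (red (ofLex x).1, (ofLex x).2)

/-- `NC^{(k)}(n)`: the non-crossing partitions of `[(k+1)n]` satisfying the mod `n`
reduction property, i.e. `Red(π)` is a non-crossing partition of `[n]` and
`Red(Kr(π))` is a non-crossing partition of `[n̄]`. -/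
def NCk (k n : ℕ) : Set (Finset (Finset (Fin ((k + 1) * n)))) :=
  {π | IsPartition π ∧ IsNonCrossing π ∧
       IsPartition (redPart π) ∧ IsNonCrossing (redPart π) ∧
       IsPartition (redPart (kr π)) ∧ IsNonCrossing (redPart (kr π))}



section KrewerasDev
open Finset
set_option linter.unusedVariables false
set_option linter.unusedSectionVars false

lemma blocks_eq {X : Type*} {P : Finset (Finset X)} (hP : IsPartition P) {B B' : Finset X}
    (hB : B ∈ P) (hB' : B' ∈ P) {x : X} (hx : x ∈ B) (hx' : x ∈ B') : B = B' := by
  obtain ⟨-, h⟩ := hP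
  obtain ⟨C, -, hu⟩ := h x
  rw [hu B ⟨hB, hx⟩, hu B' ⟨hB', hx'⟩]

variable {m : ℕ}

def Srel (p : Finset (Finset (Fin m))) (i j : Fin m) : Prop :=
  ∀ B ∈ p, (∃ x ∈ B, x ∈ Finset.Ioc i j) → ∀ y ∈ B, y ∈ Finset.Ioc i j

def SR (p : Finset (Finset (Fin m))) (i j : Fin m) : Prop :=
  i = j ∨ (i < j ∧ Srel p i j) ∨ (j < i ∧ Srel p j i)

lemma SR_refl (p : Finset (Finset (Fin m))) (i : Fin m) : SR p i i := Or.inl rfl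

lemma SR_symm {p : Finset (Finset (Fin m))} {i j : Fin m} (h : SR p i j) : SR p j i := by
  rcases h with h | h | h
  · exact Or.inl h.symm
  · exact Or.inr (Or.inr h)
  · exact Or.inr (Or.inl h)

-- T1 : i<j<k
lemma srelT1 {p : Finset (Finset (Fin m))} {i j k : Fin m} (hij : i < j) (hjk : j < k)
    (h1 : Srel p i j) (h2 : Srel p j k) : Srel p i k := by
  intro B hB ⟨x, hxB, hx⟩ y hyB
  rw [Finset.mem_Ioc] at hx
  rcases le_or_gt x j with hxj | hxj
  · have := h1 B hB ⟨x, hxB, Finset.mem_Ioc.2 ⟨hx.1, hxj⟩⟩ y hyB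
    rw [Finset.mem_Ioc] at this ⊢
    exact ⟨this.1, this.2.trans hjk.le⟩
  · have := h2 B hB ⟨x, hxB, Finset.mem_Ioc.2 ⟨hxj, hx.2⟩⟩ y hyB
    rw [Finset.mem_Ioc] at this ⊢
    exact ⟨hij.trans_le this.1.le, this.2⟩

-- T2 : i<k≤j' with Srel i j, Srel k j' , j' ≤ j ... we use two versions; general:
-- i<k, k<j, Srel p i j, Srel p k j' with k<j'  gives Srel p i k when Ioc-argument works.
-- Here the simple T2: i<k<j, Srel i j, Srel k j → Srel i k
lemma srelT2 {p : Finset (Finset (Fin m))} {i k j : Fin m} (hik : i < k) (hkj : k < j)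
    (h1 : Srel p i j) (h2 : Srel p k j) : Srel p i k := by
  intro B hB ⟨x, hxB, hx⟩ y hyB
  rw [Finset.mem_Ioc] at hx
  have hxij : x ∈ Finset.Ioc i j := Finset.mem_Ioc.2 ⟨hx.1, hx.2.trans hkj.le⟩
  have hy := h1 B hB ⟨x, hxB, hxij⟩ y hyB
  rw [Finset.mem_Ioc] at hy ⊢
  refine ⟨hy.1, ?_⟩
  by_contra hyk
  push_neg at hyk
  have := h2 B hB ⟨y, hyB, Finset.mem_Ioc.2 ⟨hyk, hy.2⟩⟩ x hxB
  rw [Finset.mem_Ioc] at this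
  exact absurd this.1 (not_lt.2 hx.2)

-- T3 : j<i<k, Srel j i, Srel j k → Srel i k
lemma srelT3 {p : Finset (Finset (Fin m))} {j i k : Fin m} (hji : j < i) (hik : i < k)
    (h1 : Srel p j i) (h2 : Srel p j k) : Srel p i k := by
  intro B hB ⟨x, hxB, hx⟩ y hyB
  rw [Finset.mem_Ioc] at hx
  have hy := h2 B hB ⟨x, hxB, Finset.mem_Ioc.2 ⟨hji.trans hx.1, hx.2⟩⟩ y hyB
  rw [Finset.mem_Ioc] at hy ⊢
  refine ⟨?_, hy.2⟩
  by_contra hyi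
  push_neg at hyi
  have := h1 B hB ⟨y, hyB, Finset.mem_Ioc.2 ⟨hy.1, hyi⟩⟩ x hxB
  rw [Finset.mem_Ioc] at this
  exact absurd this.2 (not_le.2 hx.1)

lemma SR_trans {p : Finset (Finset (Fin m))} {i j k : Fin m} (h1 : SR p i j) (h2 : SR p j k) :
    SR p i k := by
  rcases h1 with rfl | ⟨hij, s1⟩ | ⟨hji, s1⟩
  · exact h2
  · rcases h2 with rfl | ⟨hjk, s2⟩ | ⟨hkj, s2⟩
    · exact Or.inr (Or.inl ⟨hij, s1⟩)
    · exact Or.inr (Or.inl ⟨hij.trans hjk, srelT1 hij hjk s1 s2⟩)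
    · rcases lt_trichotomy i k with hik | rfl | hki
      · exact Or.inr (Or.inl ⟨hik, srelT2 hik hkj s1 s2⟩)
      · exact Or.inl rfl
      · exact Or.inr (Or.inr ⟨hki, srelT2 hki hij s2 s1⟩)
  · rcases h2 with rfl | ⟨hjk, s2⟩ | ⟨hkj, s2⟩
    · exact Or.inr (Or.inr ⟨hji, s1⟩)
    · rcases lt_trichotomy i k with hik | rfl | hki
      · exact Or.inr (Or.inl ⟨hik, srelT3 hji hik s1 s2⟩)
      · exact Or.inl rfl
      · exact Or.inr (Or.inr ⟨hki, srelT3 hjk hki s2 s1⟩)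
    · exact Or.inr (Or.inr ⟨hkj.trans hji, srelT1 hkj hji s2 s1⟩)

variable {m : ℕ}

lemma fin_add_one_val [NeZero m] {x : Fin m} (h : x.val + 1 < m) : (x + 1).val = x.val + 1 := by
  have h1 : (1 : Fin m).val = 1 % m := Fin.val_one' m
  have h2 : 1 % m = 1 := Nat.mod_eq_of_lt (by omega)
  rw [Fin.add_def]
  simp only [h1, h2]
  exact Nat.mod_eq_of_lt h

lemma fin_add_one_last [NeZero m] {x : Fin m} (h : x.val + 1 = m) : x + 1 = 0 := by
  apply Fin.ext
  rw [Fin.add_def]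
  have h1 : (1 : Fin m).val = 1 % m := Fin.val_one' m
  rcases Nat.eq_or_lt_of_le (Nat.one_le_iff_ne_zero.2 (NeZero.ne m)) with h2 | h2
  · have : x.val = 0 := by omega
    simp [h1, this, ← h2]
  · have h3 : 1 % m = 1 := Nat.mod_eq_of_lt h2
    simp only [h1, h3, h, Fin.val_zero]
    exact Nat.mod_self m

lemma fin_sub_one_val [NeZero m] {x : Fin m} (h : x.val ≠ 0) : (x - 1).val = x.val - 1 := by
  have hm : 2 ≤ m := by have := x.isLt; omega
  have h1 : (1 : Fin m).val = 1 % m := Fin.val_one' m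
  have h2 : 1 % m = 1 := Nat.mod_eq_of_lt (by omega)
  rw [Fin.sub_def]
  simp only [h1, h2]
  have h3 : m - 1 + x.val = m + (x.val - 1) := by omega
  rw [h3, Nat.add_mod_left]
  exact Nat.mod_eq_of_lt (by have := x.isLt; omega)

lemma fin_sub_one_val_zero [NeZero m] {x : Fin m} (h : x.val = 0) : (x - 1).val = m - 1 := by
  have h1 : (1 : Fin m).val = 1 % m := Fin.val_one' m
  rw [Fin.sub_def]
  rcases Nat.eq_or_lt_of_le (Nat.one_le_iff_ne_zero.2 (NeZero.ne m)) with h2 | h2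
  · simp [h1, h, ← h2]
  · have h3 : 1 % m = 1 := Nat.mod_eq_of_lt h2
    simp only [h1, h3, h, Nat.add_zero]
    exact Nat.mod_eq_of_lt (by omega)

lemma fin_sub_add [NeZero m] (x : Fin m) : x - 1 + 1 = x := sub_add_cancel x 1
lemma fin_add_sub [NeZero m] (x : Fin m) : x + 1 - 1 = x := add_sub_cancel_right x 1

variable {m : ℕ}

noncomputable def qEx (p : Finset (Finset (Fin m))) : Finset (Finset (Fin m)) :=
  Finset.univ.image fun i => Finset.univ.filter (SR p i)

lemma mem_qEx {p C} : C ∈ qEx (m := m) p ↔ ∃ i, C = Finset.univ.filter (SR p i) := by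
  simp [qEx, eq_comm]

lemma mem_class {p : Finset (Finset (Fin m))} {i j : Fin m} :
    j ∈ Finset.univ.filter (SR p i) ↔ SR p i j := by simp

lemma class_of_mem {p : Finset (Finset (Fin m))} {C : Finset (Fin m)} (hC : C ∈ qEx p)
    {x y : Fin m} (hx : x ∈ C) (hy : y ∈ C) : SR p x y := by
  obtain ⟨i, rfl⟩ := mem_qEx.1 hC
  exact SR_trans (SR_symm (mem_class.1 hx)) (mem_class.1 hy)

lemma isPartition_qEx (p : Finset (Finset (Fin m))) : IsPartition (qEx p) := by
  constructor
  · intro B hB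
    obtain ⟨i, rfl⟩ := mem_qEx.1 hB
    exact ⟨i, mem_class.2 (SR_refl p i)⟩
  · intro x
    refine ⟨Finset.univ.filter (SR p x), ⟨mem_qEx.2 ⟨x, rfl⟩, mem_class.2 (SR_refl p x)⟩, ?_⟩
    rintro C ⟨hC, hxC⟩
    obtain ⟨i, rfl⟩ := mem_qEx.1 hC
    have hix : SR p i x := mem_class.1 hxC
    ext j
    simp only [mem_class]
    exact ⟨fun h => SR_trans (SR_symm hix) h, fun h => SR_trans hix h⟩

-- the step lemma : a<b<c≤? , Srel a c, Srel b d (c<d) → Srel a b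
lemma srel_step {p : Finset (Finset (Fin m))} {a b c d : Fin m} (hab : a < b) (hbc : b < c)
    (hcd : c < d) (h1 : Srel p a c) (h2 : Srel p b d) : Srel p a b := by
  intro B hB ⟨x, hxB, hx⟩ y hyB
  rw [Finset.mem_Ioc] at hx
  have hy := h1 B hB ⟨x, hxB, Finset.mem_Ioc.2 ⟨hx.1, hx.2.trans hbc.le⟩⟩ y hyB
  rw [Finset.mem_Ioc] at hy ⊢
  refine ⟨hy.1, ?_⟩
  by_contra hyb
  push_neg at hyb
  have := h2 B hB ⟨y, hyB, Finset.mem_Ioc.2 ⟨hyb, hy.2.trans hcd.le⟩⟩ x hxB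
  rw [Finset.mem_Ioc] at this
  exact absurd this.1 (not_lt.2 hx.2)

lemma isNonCrossing_qEx (p : Finset (Finset (Fin m))) : IsNonCrossing (qEx p) := by
  intro a b c d hab hbc hcd ⟨B, hB, haB, hcB⟩ ⟨B', hB', hbB', hdB'⟩
  have hac : SR p a c := class_of_mem hB haB hcB
  have hbd : SR p b d := class_of_mem hB' hbB' hdB'
  have sac : Srel p a c := by
    rcases hac with rfl | h | h
    · exact absurd (hab.trans hbc) (lt_irrefl _)
    · exact h.2
    · exact absurd (h.1.trans (hab.trans hbc)) (lt_irrefl _)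
  have sbd : Srel p b d := by
    rcases hbd with rfl | h | h
    · exact absurd (hbc.trans hcd) (lt_irrefl _)
    · exact h.2
    · exact absurd (h.1.trans (hbc.trans hcd)) (lt_irrefl _)
  refine ⟨Finset.univ.filter (SR p a), mem_qEx.2 ⟨a, rfl⟩, mem_class.2 (SR_refl p a), mem_class.2 ?_⟩
  exact Or.inr (Or.inl ⟨hab, srel_step hab hbc hcd sac sbd⟩)

-- Interl helpers
lemma mem_unbar {B : Finset (Fin m)} {x : Interl m} :
    x ∈ unbar B ↔ ∃ i ∈ B, x = toLex (i, false) := by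
  simp [unbar, eq_comm]

lemma mem_barred {B : Finset (Fin m)} {x : Interl m} :
    x ∈ barred B ↔ ∃ i ∈ B, x = toLex (i, true) := by
  simp [barred, eq_comm]

lemma ltI {i j : Fin m} {s t : Bool} :
    toLex (i, s) < toLex (j, t) ↔ i < j ∨ (i = j ∧ s = false ∧ t = true) := by
  rw [Prod.Lex.lt_iff]
  simp [Bool.lt_iff]

lemma mem_unionPart {p q : Finset (Finset (Fin m))} {B : Finset (Interl m)} :
    B ∈ unionPart p q ↔ (∃ B₁ ∈ p, B = unbar B₁) ∨ (∃ C₁ ∈ q, B = barred C₁) := by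
  simp [unionPart, eq_comm]

-- noncrossing of p ∪ qEx p
lemma isNonCrossing_unionPart {p : Finset (Finset (Fin m))} (hnc : IsNonCrossing p) :
    IsNonCrossing (unionPart p (qEx p)) := by
  intro a b c d hab hbc hcd ⟨B, hB, haB, hcB⟩ ⟨B', hB', hbB', hdB'⟩
  rcases mem_unionPart.1 hB with ⟨B₁, hB₁, rfl⟩ | ⟨C₁, hC₁, rfl⟩
  · -- a, c unbarred
    obtain ⟨ia, hia, rfl⟩ := mem_unbar.1 haB
    obtain ⟨ic, hic, rfl⟩ := mem_unbar.1 hcB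
    rcases mem_unionPart.1 hB' with ⟨B₂, hB₂, rfl⟩ | ⟨C₂, hC₂, rfl⟩
    · -- all unbarred : use hnc
      obtain ⟨ib, hib, rfl⟩ := mem_unbar.1 hbB'
      obtain ⟨id, hid, rfl⟩ := mem_unbar.1 hdB'
      have h1 : ia < ib := by rcases ltI.1 hab with h | h; exact h; simp at h
      have h2 : ib < ic := by rcases ltI.1 hbc with h | h; exact h; simp at h
      have h3 : ic < id := by rcases ltI.1 hcd with h | h; exact h; simp at h
      obtain ⟨D, hD, h4, h5⟩ := hnc ia ib ic id h1 h2 h3 ⟨B₁, hB₁, hia, hic⟩ ⟨B₂, hB₂, hib, hid⟩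
      exact ⟨unbar D, mem_unionPart.2 (Or.inl ⟨D, hD, rfl⟩), mem_unbar.2 ⟨ia, h4, rfl⟩,
        mem_unbar.2 ⟨ib, h5, rfl⟩⟩
    · -- a,c unbarred; b,d barred : contradiction
      obtain ⟨ib, hib, rfl⟩ := mem_barred.1 hbB'
      obtain ⟨id, hid, rfl⟩ := mem_barred.1 hdB'
      exfalso
      have h1 : ia ≤ ib := by
        rcases ltI.1 hab with h | h
        · exact h.le
        · exact h.1.le
      have h2 : ib < ic := by rcases ltI.1 hbc with h | h; exact h; simp at h
      have h3 : ic ≤ id := by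
        rcases ltI.1 hcd with h | h
        · exact h.le
        · exact h.1.le
      have hS : SR p ib id := class_of_mem hC₂ hib hid
      have hbd : ib < id := h2.trans_le h3
      have sS : Srel p ib id := by
        rcases hS with rfl | h | h
        · exact absurd hbd (lt_irrefl _)
        · exact h.2
        · exact absurd (h.1.trans hbd) (lt_irrefl _)
      have := sS B₁ hB₁ ⟨ic, hic, Finset.mem_Ioc.2 ⟨h2, h3⟩⟩ ia hia
      rw [Finset.mem_Ioc] at this
      exact absurd this.1 (not_lt.2 h1)
  · -- a, c barred
    obtain ⟨ia, hia, rfl⟩ := mem_barred.1 haB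
    obtain ⟨ic, hic, rfl⟩ := mem_barred.1 hcB
    have hSac : SR p ia ic := class_of_mem hC₁ hia hic
    rcases mem_unionPart.1 hB' with ⟨B₂, hB₂, rfl⟩ | ⟨C₂, hC₂, rfl⟩
    · -- a,c barred; b,d unbarred : contradiction
      obtain ⟨ib, hib, rfl⟩ := mem_unbar.1 hbB'
      obtain ⟨id, hid, rfl⟩ := mem_unbar.1 hdB'
      exfalso
      have h1 : ia < ib := by rcases ltI.1 hab with h | h; exact h; simp at h
      have h2 : ib ≤ ic := by
        rcases ltI.1 hbc with h | h
        · exact h.le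
        · exact h.1.le
      have h3 : ic < id := by rcases ltI.1 hcd with h | h; exact h; simp at h
      have hac : ia < ic := h1.trans_le h2
      have sS : Srel p ia ic := by
        rcases hSac with rfl | h | h
        · exact absurd hac (lt_irrefl _)
        · exact h.2
        · exact absurd (h.1.trans hac) (lt_irrefl _)
      have := sS B₂ hB₂ ⟨ib, hib, Finset.mem_Ioc.2 ⟨h1, h2⟩⟩ id hid
      rw [Finset.mem_Ioc] at this
      exact absurd this.2 (not_le.2 h3)
    · -- all barred
      obtain ⟨ib, hib, rfl⟩ := mem_barred.1 hbB'
      obtain ⟨id, hid, rfl⟩ := mem_barred.1 hdB'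
      have h1 : ia < ib := by rcases ltI.1 hab with h | h; exact h; simp at h
      have h2 : ib < ic := by rcases ltI.1 hbc with h | h; exact h; simp at h
      have h3 : ic < id := by rcases ltI.1 hcd with h | h; exact h; simp at h
      have hSbd : SR p ib id := class_of_mem hC₂ hib hid
      have sac : Srel p ia ic := by
        rcases hSac with rfl | h | h
        · exact absurd (h1.trans h2) (lt_irrefl _)
        · exact h.2
        · exact absurd (h.1.trans (h1.trans h2)) (lt_irrefl _)
      have sbd : Srel p ib id := by
        rcases hSbd with rfl | h | h
        · exact absurd (h2.trans h3) (lt_irrefl _)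
        · exact h.2
        · exact absurd (h.1.trans (h2.trans h3)) (lt_irrefl _)
      have key : SR p ia ib := Or.inr (Or.inl ⟨h1, srel_step h1 h2 h3 sac sbd⟩)
      refine ⟨barred (Finset.univ.filter (SR p ia)), mem_unionPart.2 (Or.inr ⟨_, mem_qEx.2 ⟨ia, rfl⟩, rfl⟩), ?_, ?_⟩
      · exact mem_barred.2 ⟨ia, mem_class.2 (SR_refl p ia), rfl⟩
      · exact mem_barred.2 ⟨ib, mem_class.2 key, rfl⟩

-- greatest
lemma refines_qEx {p q' : Finset (Finset (Fin m))} (hq' : IsPartition q')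
    (hnc : IsNonCrossing (unionPart p q')) : Refines q' (qEx p) := by
  intro C' hC'
  obtain ⟨i₀, hi₀⟩ := hq'.1 C' hC'
  refine ⟨Finset.univ.filter (SR p i₀), mem_qEx.2 ⟨i₀, rfl⟩, ?_⟩
  intro j hj
  rw [mem_class]
  -- key : any two elements of C' are SR-related
  suffices key : ∀ u v : Fin m, u ∈ C' → v ∈ C' → u < v → Srel p u v by
    rcases lt_trichotomy i₀ j with h | h | h
    · exact Or.inr (Or.inl ⟨h, key _ _ hi₀ hj h⟩)
    · exact Or.inl h
    · exact Or.inr (Or.inr ⟨h, key _ _ hj hi₀ h⟩)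
  intro u v hu hv huv
  intro B hB ⟨x, hxB, hx⟩ y hyB
  rw [Finset.mem_Ioc] at hx ⊢
  by_contra hy
  push_neg at hy
  -- y ≤ u or y > v
  rcases le_or_gt y u with hyu | hyu
  · -- quadruple (y,false) < (u,true) < (x,false) < (v,true)
    have l1 : toLex (y, false) < toLex (u, true) := by
      rcases eq_or_lt_of_le hyu with rfl | h
      · exact ltI.2 (Or.inr ⟨rfl, rfl, rfl⟩)
      · exact ltI.2 (Or.inl h)
    have l2 : toLex (u, true) < toLex (x, false) := ltI.2 (Or.inl hx.1)
    have l3 : toLex (x, false) < toLex (v, true) := by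
      rcases eq_or_lt_of_le hx.2 with rfl | h
      · exact ltI.2 (Or.inr ⟨rfl, rfl, rfl⟩)
      · exact ltI.2 (Or.inl h)
    obtain ⟨D, hD, h4, h5⟩ := hnc _ _ _ _ l1 l2 l3
      ⟨unbar B, mem_unionPart.2 (Or.inl ⟨B, hB, rfl⟩), mem_unbar.2 ⟨y, hyB, rfl⟩,
        mem_unbar.2 ⟨x, hxB, rfl⟩⟩
      ⟨barred C', mem_unionPart.2 (Or.inr ⟨C', hC', rfl⟩), mem_barred.2 ⟨u, hu, rfl⟩,
        mem_barred.2 ⟨v, hv, rfl⟩⟩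
    rcases mem_unionPart.1 hD with ⟨D₁, hD₁, rfl⟩ | ⟨D₁, hD₁, rfl⟩
    · obtain ⟨i, hi, he⟩ := mem_unbar.1 h5
      exact Bool.false_ne_true (congrArg (fun z => (ofLex z).2) he.symm)
    · obtain ⟨i, hi, he⟩ := mem_barred.1 h4
      exact Bool.false_ne_true (congrArg (fun z => (ofLex z).2) he)
  · have hvy : v < y := hy hyu
    -- quadruple (u,true) < (x,false) < (v,true) < (y,false)
    have l1 : toLex (u, true) < toLex (x, false) := ltI.2 (Or.inl hx.1)
    have l2 : toLex (x, false) < toLex (v, true) := by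
      rcases eq_or_lt_of_le hx.2 with rfl | h
      · exact ltI.2 (Or.inr ⟨rfl, rfl, rfl⟩)
      · exact ltI.2 (Or.inl h)
    have l3 : toLex (v, true) < toLex (y, false) := ltI.2 (Or.inl hvy)
    obtain ⟨D, hD, h4, h5⟩ := hnc _ _ _ _ l1 l2 l3
      ⟨barred C', mem_unionPart.2 (Or.inr ⟨C', hC', rfl⟩), mem_barred.2 ⟨u, hu, rfl⟩,
        mem_barred.2 ⟨v, hv, rfl⟩⟩
      ⟨unbar B, mem_unionPart.2 (Or.inl ⟨B, hB, rfl⟩), mem_unbar.2 ⟨x, hxB, rfl⟩,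
        mem_unbar.2 ⟨y, hyB, rfl⟩⟩
    rcases mem_unionPart.1 hD with ⟨D₁, hD₁, rfl⟩ | ⟨D₁, hD₁, rfl⟩
    · obtain ⟨i, hi, he⟩ := mem_unbar.1 h4
      exact Bool.false_ne_true (congrArg (fun z => (ofLex z).2) he.symm)
    · obtain ⟨i, hi, he⟩ := mem_barred.1 h5
      exact Bool.false_ne_true (congrArg (fun z => (ofLex z).2) he)

lemma isKr_qEx {p : Finset (Finset (Fin m))} (hnc : IsNonCrossing p) : IsKr p (qEx p) :=
  ⟨isPartition_qEx p, isNonCrossing_unionPart hnc, fun q' h1 h2 => refines_qEx h1 h2⟩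

lemma refines_antisymm {X : Type*} {P Q : Finset (Finset X)} (hP : IsPartition P)
    (hQ : IsPartition Q) (h1 : Refines P Q) (h2 : Refines Q P) : P = Q := by
  have key : ∀ (P' Q' : Finset (Finset X)), IsPartition P' → IsPartition Q' → Refines P' Q' →
      Refines Q' P' → P' ⊆ Q' := by
    intro P' Q' hP' hQ' h1' h2' B hB
    obtain ⟨C, hC, hBC⟩ := h1' B hB
    obtain ⟨B', hB', hCB'⟩ := h2' C hC
    obtain ⟨x, hx⟩ := hP'.1 B hB
    have : B = B' := blocks_eq hP' hB hB' hx (hCB' (hBC hx))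
    subst this
    have : B = C := le_antisymm hBC hCB'
    exact this ▸ hC
  exact le_antisymm (key P Q hP hQ h1 h2) (key Q P hQ hP h2 h1)

lemma isKr_unique {p q₁ q₂ : Finset (Finset (Fin m))} (h1 : IsKr p q₁) (h2 : IsKr p q₂) :
    q₁ = q₂ :=
  refines_antisymm h1.1 h2.1 (h2.2.2 q₁ h1.1 h1.2.1) (h1.2.2 q₂ h2.1 h2.2.1)

lemma kr_eq_qEx {p : Finset (Finset (Fin m))} (hnc : IsNonCrossing p) : kr p = qEx p := by
  have hex : ∃ q, IsKr p q := ⟨qEx p, isKr_qEx hnc⟩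
  rw [kr, dif_pos hex]
  exact isKr_unique hex.choose_spec (isKr_qEx hnc)

lemma claimB [NeZero m] {p : Finset (Finset (Fin m))} (hp : IsPartition p)
    (hnc : IsNonCrossing p) {a b : Fin m} (hab : SR p a b)
    (hmin : ∀ w, SR p a w → a ≤ w) (hmax : ∀ w, SR p a w → w ≤ b) :
    ∃ B ∈ p, a ∈ B ∧ b + 1 ∈ B := by
  obtain ⟨B, ⟨hB, hb1B⟩, -⟩ := hp.2 (b + 1)
  have haleb : a ≤ b := hmax a (SR_refl p a)
  -- it suffices to show a ∈ B
  suffices ha : a ∈ B by exact ⟨B, hB, ha, hb1B⟩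
  by_contra ha
  -- disjointness of B from Ioc a b
  have hBdisj : ∀ x ∈ B, x ∉ Finset.Ioc a b := by
    intro x hxB hx
    rw [Finset.mem_Ioc] at hx
    have haltb : a < b := hx.1.trans_le hx.2
    have hsab : Srel p a b := by
      rcases hab with rfl | h | h
      · exact absurd haltb (lt_irrefl _)
      · exact h.2
      · exact absurd (h.1.trans haltb) (lt_irrefl _)
    have := hsab B hB ⟨x, hxB, Finset.mem_Ioc.2 hx⟩ (b + 1) hb1B
    rw [Finset.mem_Ioc] at this
    rcases Nat.lt_or_ge (b.val + 1) m with hw | hw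
    · have : (b + 1).val ≤ b.val := this.2
      rw [fin_add_one_val hw] at this
      omega
    · have hbm : b.val + 1 = m := by have := b.isLt; omega
      have h0 : b + 1 = 0 := fin_add_one_last hbm
      rw [h0] at this
      exact absurd this.1 (by simp [Fin.lt_def])
  -- step 1 : ∃ u ∈ B, u ≤ a
  have step1 : ∃ u ∈ B, u ≤ a := by
    rcases Nat.lt_or_ge (b.val + 1) m with hw | hw
    · -- non-wrap case
      by_contra hno
      push_neg at hno
      have hballgt : ∀ x ∈ B, b < x := by
        intro x hxB
        have h1 : a < x := hno x hxB
        have h2 := hBdisj x hxB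
        rw [Finset.mem_Ioc] at h2
        push_neg at h2
        exact h2 h1
      have hbb1 : b < b + 1 := by rw [Fin.lt_def, fin_add_one_val hw]; omega
      obtain ⟨x0, hx0⟩ := hp.1 B hB  -- nonempty
      have hBne : B.Nonempty := ⟨x0, hx0⟩
      set w := B.max' hBne with hwdef
      have hwB : w ∈ B := B.max'_mem hBne
      have hwmax : ∀ x ∈ B, x ≤ w := fun x hx => B.le_max' x hx
      have hbw : b < w := hballgt w hwB
      have hsbw : Srel p b w := by
        intro B' hB' ⟨s, hsB', hs⟩ t htB'
        rw [Finset.mem_Ioc] at hs ⊢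
        by_cases hBB' : B' = B
        · subst hBB'
          exact ⟨hballgt t htB', hwmax t htB'⟩
        · have hsnB : s ∉ B := fun hc => hBB' (blocks_eq hp hB' hB hsB' hc)
          have hs1 : b + 1 < s := by
            rcases lt_or_eq_of_le (by rw [Fin.le_def, fin_add_one_val hw]; exact hs.1 : b + 1 ≤ s) with h | h
            · exact h
            · exact absurd (h ▸ hb1B) hsnB
          have hsw : s < w := by
            rcases lt_or_eq_of_le hs.2 with h | h
            · exact h
            · exact absurd (h ▸ hwB) hsnB
          by_contra ht
          push_neg at ht
          rcases le_or_gt t b with htb | htb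
          · -- quadruple t < b+1 < s < w ; t,s ∈ B', b+1,w ∈ B
            have h1 : t < b + 1 := htb.trans_lt hbb1
            obtain ⟨D, hD, hD1, hD2⟩ := hnc t (b + 1) s w h1 hs1 hsw
              ⟨B', hB', htB', hsB'⟩ ⟨B, hB, hb1B, hwB⟩
            have : D = B := blocks_eq hp hD hB hD2 hb1B
            subst this
            exact hsnB ((blocks_eq hp hB' hD htB' hD1) ▸ hsB' : s ∈ _) |>.elim
          · -- t > b, t ∉ Ioc b w so t > w
            have htw : w < t := ht htb
            obtain ⟨D, hD, hD1, hD2⟩ := hnc (b + 1) s w t hs1 hsw htw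
              ⟨B, hB, hb1B, hwB⟩ ⟨B', hB', hsB', htB'⟩
            have : D = B := blocks_eq hp hD hB hD1 hb1B
            subst this
            exact hsnB hD2
      have : SR p b w := Or.inr (Or.inl ⟨hbw, hsbw⟩)
      have : w ≤ b := hmax w (SR_trans hab this)
      exact absurd hbw (not_lt.2 this)
    · -- wrap case : b+1 = 0 ∈ B and 0 ≤ a
      have hbm : b.val + 1 = m := by have := b.isLt; omega
      have h0 : b + 1 = 0 := fin_add_one_last hbm
      refine ⟨b + 1, hb1B, ?_⟩
      rw [h0, Fin.le_def]
      have h00 : ((0 : Fin m)).val = 0 := by simp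
      omega
  obtain ⟨u, huB, hua⟩ := step1
  have hua' : u < a := lt_of_le_of_ne hua (fun hc => ha (hc ▸ huB))
  -- v = max of elements of B below a
  have hfne : (B.filter (· < a)).Nonempty := ⟨u, Finset.mem_filter.2 ⟨huB, hua'⟩⟩
  set v := (B.filter (· < a)).max' hfne with hvdef
  have hvmem := Finset.mem_filter.1 ((B.filter (· < a)).max'_mem hfne)
  obtain ⟨hvB, hva⟩ := hvmem
  have hvmax : ∀ z ∈ B, z < a → z ≤ v := fun z hz hza =>
    (B.filter (· < a)).le_max' z (Finset.mem_filter.2 ⟨hz, hza⟩)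
  -- B ∩ Ioc v a = ∅
  have hBv : ∀ x ∈ B, x ∉ Finset.Ioc v a := by
    intro x hxB hx
    rw [Finset.mem_Ioc] at hx
    have hxa : x < a := lt_of_le_of_ne hx.2 (fun hc => ha (hc ▸ hxB))
    exact absurd (hvmax x hxB hxa) (not_le.2 hx.1)
  have hsva : Srel p v a := by
    intro B' hB' ⟨s, hsB', hs⟩ t htB'
    rw [Finset.mem_Ioc] at hs ⊢
    have hBB' : B' ≠ B := by
      intro hc
      exact hBv s (hc ▸ hsB') (Finset.mem_Ioc.2 hs)
    have hsnB : s ∉ B := fun hc => hBB' (blocks_eq hp hB' hB hsB' hc)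
    have htnB : t ∉ B := fun hc => hBB' (blocks_eq hp hB' hB htB' hc)
    by_contra ht
    push_neg at ht
    rcases le_or_gt t v with htv | htv
    · -- t ≤ v, in fact t < v
      have htv' : t < v := lt_of_le_of_ne htv (fun hc => htnB (hc ▸ hvB))
      rcases Nat.lt_or_ge (b.val + 1) m with hw | hw
      · -- quadruple t < v < s < b+1 ; v, b+1 ∈ B ; t, s ∈ B'
        have hsb1 : s < b + 1 := by
          rw [Fin.lt_def, fin_add_one_val hw]
          have : s ≤ b := hs.2.trans haleb
          rw [Fin.le_def] at this
          omega
        obtain ⟨D, hD, hD1, hD2⟩ := hnc t v s (b + 1) htv' hs.1 hsb1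
          ⟨B', hB', htB', hsB'⟩ ⟨B, hB, hvB, hb1B⟩
        have : D = B := blocks_eq hp hD hB hD2 hvB
        subst this
        exact htnB hD1
      · -- wrap : quadruple b+1=0 < t < v < s ; b+1, v ∈ B ; t, s ∈ B'
        have hbm : b.val + 1 = m := by have := b.isLt; omega
        have h0 : b + 1 = 0 := fin_add_one_last hbm
        have ht0B : (0 : Fin m) ∈ B := h0 ▸ hb1B
        have htne : t ≠ 0 := fun hc => htnB (hc.symm ▸ ht0B)
        have h0nt : b + 1 < t := by
          rw [h0, Fin.lt_def]
          have h00 : ((0 : Fin m)).val = 0 := by simp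
          have : t.val ≠ 0 := by
            intro hv
            exact htne (Fin.ext (by omega))
          omega
        obtain ⟨D, hD, hD1, hD2⟩ := hnc (b + 1) t v s h0nt htv' hs.1
          ⟨B, hB, hb1B, hvB⟩ ⟨B', hB', htB', hsB'⟩
        have : D = B := blocks_eq hp hD hB hD1 hb1B
        subst this
        exact htnB hD2
    · -- t > v, and t ∉ Ioc v a so t > a
      have hta : a < t := ht htv
      rcases le_or_gt t b with htb | htb
      · -- a < t ≤ b : contradicts Srel a b via B'
        have haltb : a < b := hta.trans_le htb
        have hsab : Srel p a b := by
          rcases hab with rfl | h | h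
          · exact absurd haltb (lt_irrefl _)
          · exact h.2
          · exact absurd (h.1.trans haltb) (lt_irrefl _)
        have := hsab B' hB' ⟨t, htB', Finset.mem_Ioc.2 ⟨hta, htb⟩⟩ s hsB'
        rw [Finset.mem_Ioc] at this
        exact absurd this.1 (not_lt.2 hs.2)
      · -- t > b : non-wrap necessarily
        have hw : b.val + 1 < m := by
          have h1 : b.val < t.val := htb
          have := t.isLt
          omega
        have hb1t : b + 1 < t := by
          have h1 : b + 1 ≤ t := by rw [Fin.le_def, fin_add_one_val hw]; exact htb
          rcases lt_or_eq_of_le h1 with h | h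
          · exact h
          · exact absurd (h ▸ hb1B) htnB
        have hsb1 : s < b + 1 := by
          rw [Fin.lt_def, fin_add_one_val hw]
          have : s ≤ b := hs.2.trans haleb
          rw [Fin.le_def] at this
          omega
        -- quadruple v < s < b+1 < t ; v, b+1 ∈ B ; s, t ∈ B'
        obtain ⟨D, hD, hD1, hD2⟩ := hnc v s (b + 1) t hs.1 hsb1 hb1t
          ⟨B, hB, hvB, hb1B⟩ ⟨B', hB', hsB', htB'⟩
        have : D = B := blocks_eq hp hD hB hD1 hvB
        subst this
        exact hsnB hD2
  have : SR p a v := Or.inr (Or.inr ⟨hva, hsva⟩)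
  exact absurd (hmin v this) (not_le.2 hva)

lemma main_bwd [NeZero m] {p : Finset (Finset (Fin m))} {x y : Fin m} (hxy : x < y)
    (h : ∃ B ∈ p, x + 1 ∈ B ∧ y + 1 ∈ B) : Srel (qEx p) x y := by
  obtain ⟨B₀, hB₀, hx1, hy1⟩ := h
  have hxv : x.val + 1 < m := by have := y.isLt; have : x.val < y.val := hxy; omega
  have hx1v : (x + 1).val = x.val + 1 := fin_add_one_val hxv
  intro C hC ⟨z, hzC, hz⟩ w hwC
  rw [Finset.mem_Ioc] at hz ⊢
  by_contra hw
  push_neg at hw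
  have hSzw : SR p z w := class_of_mem hC hzC hwC
  rcases le_or_gt w x with hwx | hwx
  · -- w ≤ x < z
    have hwz : w < z := hwx.trans_lt hz.1
    have hs : Srel p w z := by
      rcases hSzw with rfl | h | h
      · exact absurd hwz (lt_irrefl _)
      · exact absurd (h.1.trans hwz) (lt_irrefl _)
      · exact h.2
    have hmem : x + 1 ∈ Finset.Ioc w z := by
      rw [Finset.mem_Ioc, Fin.le_def, Fin.lt_def, hx1v]
      have h1 : w.val ≤ x.val := hwx
      have h2 : x.val < z.val := hz.1
      omega
    have := hs B₀ hB₀ ⟨x + 1, hx1, hmem⟩ (y + 1) hy1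
    rw [Finset.mem_Ioc] at this
    rcases Nat.lt_or_ge (y.val + 1) m with hyv | hyv
    · have h1 : (y + 1).val ≤ z.val := this.2
      rw [fin_add_one_val hyv] at h1
      have h2 : z.val ≤ y.val := hz.2
      omega
    · have h0 : y + 1 = 0 := fin_add_one_last (by have := y.isLt; omega)
      rw [h0, Fin.lt_def] at this
      have h00 : ((0 : Fin m)).val = 0 := by simp
      omega
  · -- z ≤ y < w
    have hyw : y < w := hw hwx
    have hyv : y.val + 1 < m := by have := w.isLt; have : y.val < w.val := hyw; omega
    have hzw : z < w := hz.2.trans_lt hyw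
    have hs : Srel p z w := by
      rcases hSzw with rfl | h | h
      · exact absurd hzw (lt_irrefl _)
      · exact h.2
      · exact absurd (h.1.trans hzw) (lt_irrefl _)
    have hmem : y + 1 ∈ Finset.Ioc z w := by
      rw [Finset.mem_Ioc, Fin.le_def, Fin.lt_def, fin_add_one_val hyv]
      have h1 : z.val ≤ y.val := hz.2
      have h2 : y.val < w.val := hyw
      omega
    have := hs B₀ hB₀ ⟨y + 1, hy1, hmem⟩ (x + 1) hx1
    rw [Finset.mem_Ioc, Fin.lt_def, hx1v] at this
    have h2 : x.val < z.val := hz.1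
    omega

lemma main_fwd [NeZero m] {p : Finset (Finset (Fin m))} (hp : IsPartition p)
    (hnc : IsNonCrossing p) :
    ∀ d : ℕ, ∀ x y : Fin m, y.val - x.val ≤ d → x < y → Srel (qEx p) x y →
      ∃ B ∈ p, x + 1 ∈ B ∧ y + 1 ∈ B := by
  intro d
  induction d with
  | zero => intro x y hd hxy _; exact absurd hd (by have : x.val < y.val := hxy; omega)
  | succ d ih =>
    intro x y hd hxy hS
    have hxv : x.val + 1 < m := by have := y.isLt; have : x.val < y.val := hxy; omega
    have hx1v : (x + 1).val = x.val + 1 := fin_add_one_val hxv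
    have hxx1 : x < x + 1 := by rw [Fin.lt_def, hx1v]; omega
    have hx1y : x + 1 ≤ y := by rw [Fin.le_def, hx1v]; exact hxy
    set C₁ : Finset (Fin m) := Finset.univ.filter (SR p (x + 1)) with hC₁def
    have hC₁mem : C₁ ∈ qEx p := mem_qEx.2 ⟨x + 1, rfl⟩
    have hx1C₁ : x + 1 ∈ C₁ := mem_class.2 (SR_refl p (x + 1))
    have hx1Ioc : x + 1 ∈ Finset.Ioc x y := Finset.mem_Ioc.2 ⟨hxx1, hx1y⟩
    have hC₁sub : ∀ w ∈ C₁, w ∈ Finset.Ioc x y := hS C₁ hC₁mem ⟨x + 1, hx1C₁, hx1Ioc⟩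
    have hC₁ne : C₁.Nonempty := ⟨x + 1, hx1C₁⟩
    set b₁ := C₁.max' hC₁ne with hb₁def
    have hb₁C₁ : b₁ ∈ C₁ := C₁.max'_mem hC₁ne
    have hb₁Ioc := Finset.mem_Ioc.1 (hC₁sub b₁ hb₁C₁)
    have hab : SR p (x + 1) b₁ := mem_class.1 hb₁C₁
    have hmax : ∀ w, SR p (x + 1) w → w ≤ b₁ := fun w hw => C₁.le_max' w (mem_class.2 hw)
    have hmin : ∀ w, SR p (x + 1) w → x + 1 ≤ w := by
      intro w hw
      have := Finset.mem_Ioc.1 (hC₁sub w (mem_class.2 hw))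
      rw [Fin.le_def, hx1v]
      exact this.1
    obtain ⟨B, hB, hB1, hB2⟩ := claimB hp hnc hab hmin hmax
    rcases eq_or_lt_of_le hb₁Ioc.2 with hb₁y | hb₁y
    · exact ⟨B, hB, hB1, hb₁y ▸ hB2⟩
    · -- b₁ < y : recurse
      have hxb₁ : x < b₁ := hb₁Ioc.1
      have hS' : Srel (qEx p) b₁ y := by
        intro C hC ⟨s, hsC, hs⟩ t htC
        rw [Finset.mem_Ioc] at hs ⊢
        have hsIoc : s ∈ Finset.Ioc x y := Finset.mem_Ioc.2 ⟨hxb₁.trans hs.1, hs.2⟩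
        have htIoc := Finset.mem_Ioc.1 (hS C hC ⟨s, hsC, hsIoc⟩ t htC)
        refine ⟨?_, htIoc.2⟩
        by_contra htb₁
        push_neg at htb₁
        -- t ≤ b₁, t > x ; show t ∈ C₁ for contradiction
        have htC₁ : t ∈ C₁ := by
          rw [hC₁def, mem_class]
          rcases eq_or_lt_of_le (show x + 1 ≤ t by rw [Fin.le_def, hx1v]; exact htIoc.1) with h | h
          · exact h ▸ SR_refl p (x + 1)
          · refine Or.inr (Or.inl ⟨h, ?_⟩)
            -- Srel p (x+1) t
            have hx1b₁ : x + 1 < b₁ := h.trans_le htb₁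
            have sxb₁ : Srel p (x + 1) b₁ := by
              rcases hab with heq | hh | hh
              · exact absurd (heq ▸ hx1b₁) (lt_irrefl _)
              · exact hh.2
              · exact absurd (hh.1.trans hx1b₁) (lt_irrefl _)
            have hSts : SR p t s := class_of_mem hC htC hsC
            have hts : t < s := htb₁.trans_lt hs.1
            have sts : Srel p t s := by
              rcases hSts with rfl | hh | hh
              · exact absurd hts (lt_irrefl _)
              · exact hh.2
              · exact absurd (hh.1.trans hts) (lt_irrefl _)
            intro B' hB' ⟨u, huB', hu⟩ w' hw'B'
            rw [Finset.mem_Ioc] at hu ⊢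
            have huIoc : u ∈ Finset.Ioc (x + 1) b₁ :=
              Finset.mem_Ioc.2 ⟨hu.1, hu.2.trans htb₁⟩
            have hw' := Finset.mem_Ioc.1
              (sxb₁ B' hB' ⟨u, huB', huIoc⟩ w' hw'B')
            refine ⟨hw'.1, ?_⟩
            by_contra hw't
            push_neg at hw't
            have hw'Ioc : w' ∈ Finset.Ioc t s := Finset.mem_Ioc.2 ⟨hw't, hw'.2.trans hs.1.le⟩
            have := Finset.mem_Ioc.1 (sts B' hB' ⟨w', hw'B', hw'Ioc⟩ u huB')
            exact absurd this.1 (not_lt.2 hu.2)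
        have hCC₁ : C = C₁ := blocks_eq (isPartition_qEx p) hC hC₁mem htC htC₁
        have : s ∈ C₁ := hCC₁ ▸ hsC
        have := C₁.le_max' s this
        exact absurd (hs.1.trans_le this) (lt_irrefl _)
      have hd' : y.val - b₁.val ≤ d := by
        have h1 : x.val < b₁.val := hxb₁
        omega
      obtain ⟨B', hB', hB'1, hB'2⟩ := ih b₁ y hd' hb₁y hS'
      have : B = B' := blocks_eq hp hB hB' hB2 hB'1
      exact ⟨B, hB, hB1, this ▸ hB'2⟩

-- generic image partition lemma
lemma isPartition_image {P : Finset (Finset (Fin m))} (hP : IsPartition P)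
    (f g : Fin m → Fin m) (hgf : ∀ x, g (f x) = x) (hfg : ∀ x, f (g x) = x) :
    IsPartition (P.image fun B => B.image f) := by
  constructor
  · intro B hB
    obtain ⟨B₁, hB₁, rfl⟩ := Finset.mem_image.1 hB
    obtain ⟨x, hx⟩ := hP.1 B₁ hB₁
    exact ⟨f x, Finset.mem_image.2 ⟨x, hx, rfl⟩⟩
  · intro x
    obtain ⟨B, ⟨hB, hgx⟩, hu⟩ := hP.2 (g x)
    refine ⟨B.image f, ⟨Finset.mem_image.2 ⟨B, hB, rfl⟩, Finset.mem_image.2 ⟨g x, hgx, hfg x⟩⟩, ?_⟩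
    rintro C ⟨hC, hxC⟩
    obtain ⟨B', hB', rfl⟩ := Finset.mem_image.1 hC
    obtain ⟨z, hzB', hz⟩ := Finset.mem_image.1 hxC
    have hz' : z = g x := by rw [← hgf z, hz]
    have : B' = B := hu B' ⟨hB', hz' ▸ hzB'⟩
    rw [this]

noncomputable def rotP [NeZero m] (p : Finset (Finset (Fin m))) : Finset (Finset (Fin m)) :=
  p.image fun B => B.image (fun x => x - 1)
noncomputable def rotP' [NeZero m] (p : Finset (Finset (Fin m))) : Finset (Finset (Fin m)) :=
  p.image fun B => B.image (fun x => x + 1)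

lemma mem_image_sub_one [NeZero m] {B : Finset (Fin m)} {x : Fin m} :
    x ∈ B.image (fun z => z - 1) ↔ x + 1 ∈ B := by
  constructor
  · rintro h
    obtain ⟨z, hz, rfl⟩ := Finset.mem_image.1 h
    rwa [sub_add_cancel]
  · intro h
    exact Finset.mem_image.2 ⟨x + 1, h, add_sub_cancel_right x 1⟩

lemma mem_image_add_one [NeZero m] {B : Finset (Fin m)} {x : Fin m} :
    x ∈ B.image (fun z => z + 1) ↔ x - 1 ∈ B := by
  constructor
  · rintro h
    obtain ⟨z, hz, rfl⟩ := Finset.mem_image.1 h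
    rwa [add_sub_cancel_right]
  · intro h
    exact Finset.mem_image.2 ⟨x - 1, h, sub_add_cancel x 1⟩

lemma rotP_rotP' [NeZero m] (p : Finset (Finset (Fin m))) : rotP' (rotP p) = p := by
  rw [rotP, rotP', Finset.image_image]
  have : ∀ B : Finset (Fin m), ((B.image (fun x => x - 1)).image (fun x => x + 1)) = B := by
    intro B
    rw [Finset.image_image]
    have : ((fun x : Fin m => x + 1) ∘ (fun x => x - 1)) = id := by
      funext x; simp [sub_add_cancel]
    rw [this, Finset.image_id]
  calc p.image ((fun B : Finset (Fin m) => B.image (fun x => x + 1)) ∘ (fun B => B.image (fun x => x - 1)))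
      = p.image (fun B => ((B.image (fun x => x - 1)).image (fun x => x + 1))) := rfl
    _ = p.image (fun B => B) := by simp only [this]
    _ = p := Finset.image_id'

lemma rotP'_rotP [NeZero m] (p : Finset (Finset (Fin m))) : rotP (rotP' p) = p := by
  rw [rotP, rotP', Finset.image_image]
  have : ∀ B : Finset (Fin m), ((B.image (fun x => x + 1)).image (fun x => x - 1)) = B := by
    intro B
    rw [Finset.image_image]
    have : ((fun x : Fin m => x - 1) ∘ (fun x => x + 1)) = id := by
      funext x; simp [add_sub_cancel_right]
    rw [this, Finset.image_id]
  calc p.image ((fun B : Finset (Fin m) => B.image (fun x => x - 1)) ∘ (fun B => B.image (fun x => x + 1)))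
      = p.image (fun B => ((B.image (fun x => x + 1)).image (fun x => x - 1))) := rfl
    _ = p.image (fun B => B) := by simp only [this]
    _ = p := Finset.image_id'

lemma isPartition_rotP [NeZero m] {p : Finset (Finset (Fin m))} (hp : IsPartition p) :
    IsPartition (rotP p) :=
  isPartition_image hp (fun x => x - 1) (fun x => x + 1)
    (fun x => sub_add_cancel x 1) (fun x => add_sub_cancel_right x 1)

lemma isPartition_rotP' [NeZero m] {p : Finset (Finset (Fin m))} (hp : IsPartition p) :
    IsPartition (rotP' p) :=
  isPartition_image hp (fun x => x + 1) (fun x => x - 1)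
    (fun x => add_sub_cancel_right x 1) (fun x => sub_add_cancel x 1)

lemma isNonCrossing_rotP [NeZero m] {p : Finset (Finset (Fin m))} (hp : IsPartition p)
    (hnc : IsNonCrossing p) : IsNonCrossing (rotP p) := by
  intro a b c d hab hbc hcd ⟨B, hB, haB, hcB⟩ ⟨B', hB', hbB', hdB'⟩
  obtain ⟨B₁, hB₁, rfl⟩ := Finset.mem_image.1 hB
  obtain ⟨B₂, hB₂, rfl⟩ := Finset.mem_image.1 hB'
  rw [mem_image_sub_one] at haB hcB
  rw [mem_image_sub_one] at hbB' hdB'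
  have hvab : a.val < b.val := hab
  have hvbc : b.val < c.val := hbc
  have hvcd : c.val < d.val := hcd
  suffices hB12 : ∃ D ∈ p, a + 1 ∈ D ∧ b + 1 ∈ D by
    obtain ⟨D, hD, h1, h2⟩ := hB12
    refine ⟨D.image (fun x => x - 1), Finset.mem_image.2 ⟨D, hD, rfl⟩, ?_, ?_⟩
    · rw [mem_image_sub_one]; exact h1
    · rw [mem_image_sub_one]; exact h2
  rcases Nat.lt_or_ge (d.val + 1) m with hw | hw
  · -- no wrap
    have ha1 : (a + 1).val = a.val + 1 := fin_add_one_val (by omega)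
    have hb1 : (b + 1).val = b.val + 1 := fin_add_one_val (by omega)
    have hc1 : (c + 1).val = c.val + 1 := fin_add_one_val (by omega)
    have hd1 : (d + 1).val = d.val + 1 := fin_add_one_val (by omega)
    exact hnc (a+1) (b+1) (c+1) (d+1) (by rw [Fin.lt_def, ha1, hb1]; omega)
      (by rw [Fin.lt_def, hb1, hc1]; omega) (by rw [Fin.lt_def, hc1, hd1]; omega)
      ⟨B₁, hB₁, haB, hcB⟩ ⟨B₂, hB₂, hbB', hdB'⟩
  · -- wrap : d + 1 = 0, quadruple 0 < a+1 < b+1 < c+1 ; 0, b+1 ∈ B₂ ; a+1, c+1 ∈ B₁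
    have hd0 : d + 1 = 0 := fin_add_one_last (by have := d.isLt; omega)
    have ha1 : (a + 1).val = a.val + 1 := fin_add_one_val (by have := d.isLt; omega)
    have hb1 : (b + 1).val = b.val + 1 := fin_add_one_val (by have := d.isLt; omega)
    have hc1 : (c + 1).val = c.val + 1 := fin_add_one_val (by have := d.isLt; omega)
    have h00 : ((0 : Fin m)).val = 0 := by simp
    obtain ⟨D, hD, h1, h2⟩ := hnc (d+1) (a+1) (b+1) (c+1)
      (by rw [Fin.lt_def, hd0, h00, ha1]; omega)
      (by rw [Fin.lt_def, ha1, hb1]; omega) (by rw [Fin.lt_def, hb1, hc1]; omega)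
      ⟨B₂, hB₂, hdB', hbB'⟩ ⟨B₁, hB₁, haB, hcB⟩
    -- D ∋ d+1, a+1 ; D = B₂ ; then a+1 ∈ B₂ ∩ B₁ so B₁ = B₂
    have hDB₂ : D = B₂ := blocks_eq hp hD hB₂ h1 hdB'
    have hB₁B₂ : B₁ = B₂ := blocks_eq hp hB₁ hB₂ haB (hDB₂ ▸ h2)
    exact ⟨B₂, hB₂, hB₁B₂ ▸ haB, hbB'⟩

lemma isNonCrossing_rotP' [NeZero m] {p : Finset (Finset (Fin m))} (hp : IsPartition p)
    (hnc : IsNonCrossing p) : IsNonCrossing (rotP' p) := by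
  intro a b c d hab hbc hcd ⟨B, hB, haB, hcB⟩ ⟨B', hB', hbB', hdB'⟩
  obtain ⟨B₁, hB₁, rfl⟩ := Finset.mem_image.1 hB
  obtain ⟨B₂, hB₂, rfl⟩ := Finset.mem_image.1 hB'
  rw [mem_image_add_one] at haB hcB
  rw [mem_image_add_one] at hbB' hdB'
  have hvab : a.val < b.val := hab
  have hvbc : b.val < c.val := hbc
  have hvcd : c.val < d.val := hcd
  suffices hB12 : ∃ D ∈ p, a - 1 ∈ D ∧ b - 1 ∈ D by
    obtain ⟨D, hD, h1, h2⟩ := hB12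
    refine ⟨D.image (fun x => x + 1), Finset.mem_image.2 ⟨D, hD, rfl⟩, ?_, ?_⟩
    · rw [mem_image_add_one]; exact h1
    · rw [mem_image_add_one]; exact h2
  rcases eq_or_ne a.val 0 with hw | hw
  · -- wrap : a - 1 = last ; quadruple b-1 < c-1 < d-1 < a-1 ; b-1,d-1 ∈ B₂ ; c-1,a-1 ∈ B₁
    have hb1 : (b - 1).val = b.val - 1 := fin_sub_one_val (by omega)
    have hc1 : (c - 1).val = c.val - 1 := fin_sub_one_val (by omega)
    have hd1 : (d - 1).val = d.val - 1 := fin_sub_one_val (by omega)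
    have ha1 : (a - 1).val = m - 1 := fin_sub_one_val_zero hw
    have hdm := d.isLt
    obtain ⟨D, hD, h1, h2⟩ := hnc (b-1) (c-1) (d-1) (a-1)
      (by rw [Fin.lt_def, hb1, hc1]; omega) (by rw [Fin.lt_def, hc1, hd1]; omega)
      (by rw [Fin.lt_def, hd1, ha1]; omega)
      ⟨B₂, hB₂, hbB', hdB'⟩ ⟨B₁, hB₁, hcB, haB⟩
    -- D ∋ b-1, c-1 ⇒ D = B₂ ⇒ c-1 ∈ B₂ ∩ B₁ ⇒ B₁ = B₂
    have hDB₂ : D = B₂ := blocks_eq hp hD hB₂ h1 hbB'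
    have hB₁B₂ : B₁ = B₂ := blocks_eq hp hB₁ hB₂ hcB (hDB₂ ▸ h2)
    exact ⟨B₂, hB₂, hB₁B₂ ▸ haB, hbB'⟩
  · -- no wrap
    have ha1 : (a - 1).val = a.val - 1 := fin_sub_one_val hw
    have hb1 : (b - 1).val = b.val - 1 := fin_sub_one_val (by omega)
    have hc1 : (c - 1).val = c.val - 1 := fin_sub_one_val (by omega)
    have hd1 : (d - 1).val = d.val - 1 := fin_sub_one_val (by omega)
    exact hnc (a-1) (b-1) (c-1) (d-1) (by rw [Fin.lt_def, ha1, hb1]; omega)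
      (by rw [Fin.lt_def, hb1, hc1]; omega) (by rw [Fin.lt_def, hc1, hd1]; omega)
      ⟨B₁, hB₁, haB, hcB⟩ ⟨B₂, hB₂, hbB', hdB'⟩

lemma partition_eq_of_samerel {X : Type*} {P Q : Finset (Finset X)} (hP : IsPartition P)
    (hQ : IsPartition Q)
    (h : ∀ x y : X, (∃ B ∈ P, x ∈ B ∧ y ∈ B) ↔ (∃ B ∈ Q, x ∈ B ∧ y ∈ B)) : P = Q := by
  have key : ∀ (P' Q' : Finset (Finset X)), IsPartition P' → IsPartition Q' →
      (∀ x y : X, (∃ B ∈ P', x ∈ B ∧ y ∈ B) ↔ (∃ B ∈ Q', x ∈ B ∧ y ∈ B)) → P' ⊆ Q' := by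
    intro P' Q' hP' hQ' hrel B hB
    obtain ⟨x₀, hx₀⟩ := hP'.1 B hB
    obtain ⟨C, ⟨hC, hx₀C⟩, -⟩ := hQ'.2 x₀
    suffices hBC : B = C by exact hBC ▸ hC
    ext y
    constructor
    · intro hy
      obtain ⟨C', hC', h1, h2⟩ := (hrel x₀ y).1 ⟨B, hB, hx₀, hy⟩
      exact (blocks_eq hQ' hC' hC h1 hx₀C) ▸ h2
    · intro hy
      obtain ⟨B', hB', h1, h2⟩ := (hrel x₀ y).2 ⟨C, hC, hx₀C, hy⟩
      exact (blocks_eq hP' hB' hB h1 hx₀) ▸ h2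
  refine le_antisymm (key P Q hP hQ h) (key Q P hQ hP fun x y => (h x y).symm)


lemma samerel_qEx {q : Finset (Finset (Fin m))} {x y : Fin m} :
    (∃ C ∈ qEx q, x ∈ C ∧ y ∈ C) ↔ SR q x y := by
  constructor
  · rintro ⟨C, hC, h1, h2⟩
    exact class_of_mem hC h1 h2
  · intro h
    exact ⟨_, mem_qEx.2 ⟨x, rfl⟩, mem_class.2 (SR_refl q x), mem_class.2 h⟩

lemma SR_qEx_iff [NeZero m] {p : Finset (Finset (Fin m))} (hp : IsPartition p)
    (hnc : IsNonCrossing p) (x y : Fin m) :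
    SR (qEx p) x y ↔ ∃ B ∈ p, x + 1 ∈ B ∧ y + 1 ∈ B := by
  constructor
  · intro h
    rcases h with rfl | ⟨hlt, hs⟩ | ⟨hlt, hs⟩
    · obtain ⟨B, ⟨hB, hx⟩, -⟩ := hp.2 (x + 1)
      exact ⟨B, hB, hx, hx⟩
    · exact main_fwd hp hnc (y.val - x.val) x y le_rfl hlt hs
    · obtain ⟨B, hB, h1, h2⟩ := main_fwd hp hnc (x.val - y.val) y x le_rfl hlt hs
      exact ⟨B, hB, h2, h1⟩
  · rintro ⟨B, hB, h1, h2⟩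
    rcases lt_trichotomy x y with hlt | rfl | hlt
    · exact Or.inr (Or.inl ⟨hlt, main_bwd hlt ⟨B, hB, h1, h2⟩⟩)
    · exact Or.inl rfl
    · exact Or.inr (Or.inr ⟨hlt, main_bwd hlt ⟨B, hB, h2, h1⟩⟩)

lemma krkr_eq_rot [NeZero m] {p : Finset (Finset (Fin m))} (hp : IsPartition p)
    (hnc : IsNonCrossing p) : qEx (qEx p) = rotP p := by
  apply partition_eq_of_samerel (isPartition_qEx _) (isPartition_rotP hp)
  intro x y
  rw [samerel_qEx]
  constructor
  · intro h
    obtain ⟨B, hB, h1, h2⟩ := (SR_qEx_iff hp hnc x y).1 h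
    exact ⟨B.image (fun z => z - 1), Finset.mem_image.2 ⟨B, hB, rfl⟩,
      mem_image_sub_one.2 h1, mem_image_sub_one.2 h2⟩
  · rintro ⟨C, hC, h1, h2⟩
    obtain ⟨B, hB, rfl⟩ := Finset.mem_image.1 hC
    exact (SR_qEx_iff hp hnc x y).2 ⟨B, hB, mem_image_sub_one.1 h1, mem_image_sub_one.1 h2⟩

lemma kr_krkr [NeZero m] {p : Finset (Finset (Fin m))} (hp : IsPartition p)
    (hnc : IsNonCrossing p) : kr (kr p) = rotP p := by
  rw [kr_eq_qEx hnc, kr_eq_qEx (isNonCrossing_qEx p), krkr_eq_rot hp hnc]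

lemma kr_partition [NeZero m] {p : Finset (Finset (Fin m))} (hnc : IsNonCrossing p) :
    IsPartition (kr p) := by
  rw [kr_eq_qEx hnc]; exact isPartition_qEx p

lemma kr_nc [NeZero m] {p : Finset (Finset (Fin m))} (hnc : IsNonCrossing p) :
    IsNonCrossing (kr p) := by
  rw [kr_eq_qEx hnc]; exact isNonCrossing_qEx p

lemma kr_rotP [NeZero m] {p : Finset (Finset (Fin m))} (hp : IsPartition p)
    (hnc : IsNonCrossing p) : kr (rotP p) = rotP (kr p) := by
  have e := kr_krkr (p := kr p) (kr_partition hnc) (kr_nc hnc)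
  rw [kr_krkr hp hnc] at e
  exact e

lemma kr_rotP' [NeZero m] {p : Finset (Finset (Fin m))} (hp : IsPartition p)
    (hnc : IsNonCrossing p) : kr (rotP' p) = rotP' (kr p) := by
  have e := kr_rotP (isPartition_rotP' hp) (isNonCrossing_rotP' hp hnc)
  rw [rotP'_rotP] at e
  have e2 := congrArg rotP' e
  rw [rotP_rotP'] at e2
  exact e2.symm

lemma SR_mono {pi rho : Finset (Finset (Fin m))} (h : Refines pi rho) {i j : Fin m}
    (hS : SR rho i j) : SR pi i j := by
  have hmono : ∀ i' j' : Fin m, Srel rho i' j' → Srel pi i' j' := by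
    intro i' j' hs B hB ⟨x, hx, hIoc⟩ y hy
    obtain ⟨C, hC, hBC⟩ := h B hB
    exact hs C hC ⟨x, hBC hx, hIoc⟩ y (hBC hy)
  rcases hS with rfl | ⟨hlt, hs⟩ | ⟨hlt, hs⟩
  · exact Or.inl rfl
  · exact Or.inr (Or.inl ⟨hlt, hmono _ _ hs⟩)
  · exact Or.inr (Or.inr ⟨hlt, hmono _ _ hs⟩)

lemma refines_kr {pi rho : Finset (Finset (Fin m))} (hpinc : IsNonCrossing pi)
    (hrhonc : IsNonCrossing rho) (h : Refines pi rho) : Refines (kr rho) (kr pi) := by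
  rw [kr_eq_qEx hrhonc, kr_eq_qEx hpinc]
  intro C hC
  obtain ⟨i, rfl⟩ := mem_qEx.1 hC
  refine ⟨Finset.univ.filter (SR pi i), mem_qEx.2 ⟨i, rfl⟩, ?_⟩
  intro j hj
  exact mem_class.2 (SR_mono h (mem_class.1 hj))

section Red
variable {k n : ℕ} [NeZero n]

instance : NeZero ((k + 1) * n) := ⟨Nat.mul_ne_zero (Nat.succ_ne_zero k) (NeZero.ne n)⟩

lemma red_val (x : Fin ((k + 1) * n)) : (red x).val = x.val % n := rfl

lemma red_sub (x : Fin ((k + 1) * n)) : red (x - 1) = red x - 1 := by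
  have hn : 0 < n := Nat.pos_of_ne_zero (NeZero.ne n)
  apply Fin.ext
  rw [red_val]
  obtain hq := Nat.div_add_mod x.val n
  set q := x.val / n with hqdef
  set r := x.val % n with hrdef
  have hr : r < n := Nat.mod_lt _ hn
  have hred : (red x).val = r := rfl
  rcases eq_or_ne x.val 0 with h0 | h0
  · rw [fin_sub_one_val_zero h0]
    have hr0 : r = 0 := by omega
    have h1 : (red x - 1).val = n - 1 := fin_sub_one_val_zero (by rw [hred, hr0])
    rw [h1]
    have h2 : (k + 1) * n - 1 = n * k + (n - 1) := by
      have : (k + 1) * n = n * k + n := by ring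
      omega
    rw [h2, Nat.mul_add_mod]
    exact Nat.mod_eq_of_lt (by omega)
  · rw [fin_sub_one_val h0]
    rcases eq_or_ne r 0 with hr0 | hr0
    · have hq1 : 1 ≤ q := by
        rcases Nat.eq_zero_or_pos q with h | h
        · exfalso
          rw [h, Nat.mul_zero, Nat.zero_add] at hq
          omega
        · exact h
      obtain ⟨q', hq'⟩ : ∃ q', q = q' + 1 := ⟨q - 1, by omega⟩
      rw [hq', Nat.mul_succ] at hq
      have h2 : x.val - 1 = n * q' + (n - 1) := by omega
      rw [h2, Nat.mul_add_mod]
      have h1 : (red x - 1).val = n - 1 := fin_sub_one_val_zero (by rw [hred, hr0])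
      rw [h1]
      exact Nat.mod_eq_of_lt (by omega)
    · have h2 : x.val - 1 = n * q + (r - 1) := by omega
      rw [h2, Nat.mul_add_mod]
      have h1 : (red x - 1).val = r - 1 := by
        rw [fin_sub_one_val (by rw [hred]; exact hr0), hred]
      rw [h1]
      exact Nat.mod_eq_of_lt (by omega)

lemma red_add (x : Fin ((k + 1) * n)) : red (x + 1) = red x + 1 := by
  have hn : 0 < n := Nat.pos_of_ne_zero (NeZero.ne n)
  apply Fin.ext
  rw [red_val]
  obtain hq := Nat.div_add_mod x.val n
  set q := x.val / n with hqdef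
  set r := x.val % n with hrdef
  have hr : r < n := Nat.mod_lt _ hn
  have hred : (red x).val = r := rfl
  rcases Nat.lt_or_ge (x.val + 1) ((k + 1) * n) with hw | hw
  · rw [fin_add_one_val hw]
    rcases Nat.lt_or_ge (r + 1) n with hr1 | hr1
    · have h1 : (red x + 1).val = r + 1 := fin_add_one_val (by rw [hred]; exact hr1)
      rw [h1]
      have h2 : x.val + 1 = n * q + (r + 1) := by omega
      rw [h2, Nat.mul_add_mod]
      exact Nat.mod_eq_of_lt hr1
    · have hrn : r + 1 = n := by omega
      have h1 : red x + 1 = 0 := fin_add_one_last (by rw [hred]; exact hrn)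
      rw [h1]
      have h2 : x.val + 1 = n * q + n := by omega
      rw [h2]
      simp [Nat.mul_add_mod]
  · have hxm : x.val + 1 = (k + 1) * n := by have := x.isLt; omega
    have h0 : x + 1 = 0 := fin_add_one_last hxm
    rw [h0]
    have hrn : r = n - 1 := by
      have h2 : (k + 1) * n = n * (k + 1) := by ring
      have h3 : n * (k + 1) = n * k + n := Nat.mul_succ n k
      have : x.val = n * k + (n - 1) := by omega
      rw [hrdef, this, Nat.mul_add_mod]
      exact Nat.mod_eq_of_lt (by omega)
    have h1 : red x + 1 = 0 := fin_add_one_last (by rw [hred]; omega)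
    rw [h1]
    simp

lemma redPart_rotP (π : Finset (Finset (Fin ((k + 1) * n)))) :
    redPart (rotP π) = rotP (redPart π) := by
  rw [redPart, rotP, rotP, redPart, Finset.image_image, Finset.image_image]
  apply Finset.image_congr
  intro B hB
  simp only [Function.comp_apply]
  rw [Finset.image_image, Finset.image_image]
  apply Finset.image_congr
  intro x hx
  simp only [Function.comp_apply]
  exact red_sub x

lemma redPart_rotP' (π : Finset (Finset (Fin ((k + 1) * n)))) :
    redPart (rotP' π) = rotP' (redPart π) := by
  rw [redPart, rotP', rotP', redPart, Finset.image_image, Finset.image_image]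
  apply Finset.image_congr
  intro B hB
  simp only [Function.comp_apply]
  rw [Finset.image_image, Finset.image_image]
  apply Finset.image_congr
  intro x hx
  simp only [Function.comp_apply]
  exact red_add x
end Red

end KrewerasDev

/-- **Statement 9.** (Identifying partitions of the barred copy with partitions of
`[(k+1)n]` by relabeling, as built into `kr`.) The Kreweras complement of a non-crossing
partition of type `k` is again of type `k`; the map `π ↦ Kr(π)` is a bijection of
`NC^{(k)}(n)` onto itself, and it reverses the reverse-refinement order. -/
theorem stmt9 (k n : ℕ) (hn : 1 ≤ n) :
    (∀ π ∈ NCk k n, kr π ∈ NCk k n) ∧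
    Set.BijOn (kr (m := (k + 1) * n)) (NCk k n) (NCk k n) ∧
    (∀ π ∈ NCk k n, ∀ ρ ∈ NCk k n, Refines π ρ → Refines (kr ρ) (kr π)) := by
  haveI : NeZero n := ⟨by omega⟩
  have hmap : ∀ π ∈ NCk k n, kr π ∈ NCk k n := by
    rintro π ⟨h1, h2, h3, h4, h5, h6⟩
    refine ⟨kr_partition h2, kr_nc h2, h5, h6, ?_, ?_⟩
    · rw [kr_krkr h1 h2, redPart_rotP]
      exact isPartition_rotP h3
    · rw [kr_krkr h1 h2, redPart_rotP]
      exact isNonCrossing_rotP h3 h4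
  have hrot' : ∀ ρ ∈ NCk k n, rotP' ρ ∈ NCk k n := by
    rintro ρ ⟨h1, h2, h3, h4, h5, h6⟩
    refine ⟨isPartition_rotP' h1, isNonCrossing_rotP' h1 h2, ?_, ?_, ?_, ?_⟩
    · rw [redPart_rotP']
      exact isPartition_rotP' h3
    · rw [redPart_rotP']
      exact isNonCrossing_rotP' h3 h4
    · rw [kr_rotP' h1 h2, redPart_rotP']
      exact isPartition_rotP' h5
    · rw [kr_rotP' h1 h2, redPart_rotP']
      exact isNonCrossing_rotP' h5 h6
  refine ⟨hmap, ⟨hmap, ?_, ?_⟩, ?_⟩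
  · intro π hπ ρ hρ he
    have e1 : rotP π = rotP ρ := by
      rw [← kr_krkr hπ.1 hπ.2.1, ← kr_krkr hρ.1 hρ.2.1, he]
    have e2 := congrArg rotP' e1
    rwa [rotP_rotP', rotP_rotP'] at e2
  · intro ρ hρ
    refine ⟨kr (rotP' ρ), hmap _ (hrot' ρ hρ), ?_⟩
    have h1 := hrot' ρ hρ
    rw [kr_krkr h1.1 h1.2.1, rotP'_rotP]
  · intro π hπ ρ hρ h
    exact refines_kr hπ.2.1 hρ.2.1 h
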